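/- Let R be a commutative Noetherian ring, M a finitely generated R-module, 𝔭 a prime ideal, and N ⊊ K submodules of M such that N is a 𝔭-prime submodule of K and K is maximal among submodules of M with this property. If L is any submodule of M with N ∩ L ≠ K ∩ L, then N ∩ L is a 𝔭-prime submodule of K ∩ L. -/
import Mathlib


theorem stmt9 {R M : Type*} [CommRing R] [IsNoetherianRing R] [AddCommGroup M]
    [Module R M] [Module.Finite R M] (p : Ideal R) (hp : p.IsPrime)
    (N K : Submodule R M) (hNK : N < K)
    (hcolon : Submodule.colon N K = p)
    (hprime : ∀ (a : R), ∀ x ∈ K, a • x ∈ N → a ∈ p ∨ x ∈ N)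
    (hmax : ∀ K' : Submodule R M, K < K' →
      ¬ (Submodule.colon N K' = p ∧
        ∀ (a : R), ∀ x ∈ K', a • x ∈ N → a ∈ p ∨ x ∈ N))
    (L : Submodule R M) (hL : N ⊓ L ≠ K ⊓ L) :
    N ⊓ L < K ⊓ L ∧ Submodule.colon (N ⊓ L) (K ⊓ L) = p ∧
      ∀ (a : R), ∀ x ∈ K ⊓ L, a • x ∈ N ⊓ L → a ∈ p ∨ x ∈ N ⊓ L := by
  have hle : N ⊓ L ≤ K ⊓ L := inf_le_inf_right L hNK.le
  have hlt : N ⊓ L < K ⊓ L := lt_of_le_of_ne hle hL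
  refine ⟨hlt, ?_, ?_⟩
  · -- colon
    obtain ⟨x, hxK, hxN⟩ := SetLike.exists_of_lt hlt
    apply le_antisymm
    · intro a ha
      rw [Submodule.mem_colon] at ha
      have := ha x hxK
      rcases hprime a x hxK.1 this.1 with h | h
      · exact h
      · exact absurd ⟨h, hxK.2⟩ hxN
    · intro a ha
      rw [Submodule.mem_colon]
      intro y hy
      have : a ∈ Submodule.colon N K := hcolon ▸ ha
      rw [Submodule.mem_colon] at this
      exact ⟨this y hy.1, L.smul_mem a hy.2⟩
  · intro a x hx hax
    rcases hprime a x hx.1 hax.1 with h | h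
    · exact Or.inl h
    · exact Or.inr ⟨h, hx.2⟩
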